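/- Let S be a Hausdorff topological semigroup and x ∈ S. Suppose that for some free ultrafilter p on ℕ, the double sequence (x^{m-n})_{m ≥ n} has a double p-limit e = lim_{n→p} lim_{m→p} x^{m-n} in S (meaning: the set P of n for which e_{-n} := lim_{m→p} x^{m-n} exists in S belongs to p, and the p-limit of (e_{-n})_{n∈P} exists and equals e). Then e is an idempotent: e·e = e. -/
import Mathlib


/-- An ultrafilter on `ℕ` is free if it contains the cofinite filter. -/
def FreeUltrafilter (p : Ultrafilter ℕ) : Prop := (↑p : Filter ℕ) ≤ Filter.cofinite

/-- Let `S` be a Hausdorff topological semigroup, `x ∈ S`, and `p` a free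
ultrafilter on `ℕ`.  Let `a m n = x^(m-n)` (for `m > n`), encoded by the
recurrences `a (n+1) n = x` and `a (m+1) n = a m n * x`.  If the double
`p`-limit `e = lim_{n→p} lim_{m→p} x^(m-n)` exists (the set `P` of `n` for
which the inner limit `E n = lim_{m→p} x^(m-n)` exists belongs to `p`, and
`E` has `p`-limit `e`), then `e` is an idempotent. -/
theorem idempotent_of_double_p_limit {S : Type*} [Semigroup S]
    [TopologicalSpace S] [T2Space S] [ContinuousMul S]
    (x : S) (p : Ultrafilter ℕ) (hp : FreeUltrafilter p)
    (a : ℕ → ℕ → S)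
    (ha1 : ∀ n, a (n + 1) n = x)
    (ha2 : ∀ m n, n < m → a (m + 1) n = a m n * x)
    (e : S) (E : ℕ → S)
    (hP : {n : ℕ | Filter.Tendsto (fun m => a m n) ↑p (nhds (E n))} ∈ p)
    (hE : Filter.Tendsto E ↑p (nhds e)) :
    e * e = e := by
  -- `x` commutes with every `a m n`
  have comm : ∀ m n, n < m → a m n * x = x * a m n := by
    intro m
    induction m with
    | zero => intro n h; omega
    | succ m ih =>
      intro n h
      rcases Nat.lt_succ_iff_lt_or_eq.mp h with h' | rfl
      · rw [ha2 m n h', ih n h', mul_assoc, ih n h']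
      · rw [ha1]
  -- multiplicativity: `a m n = a m k * a k n` for `n < k < m`
  have split : ∀ n k m, n < k → k < m → a m n = a m k * a k n := by
    intro n k m hnk
    induction m with
    | zero => intro h; omega
    | succ m ih =>
      intro hkm
      rcases Nat.lt_succ_iff_lt_or_eq.mp hkm with h' | rfl
      · rw [ha2 m n (hnk.trans h'), ih h', ha2 m k h', mul_assoc, mul_assoc,
          comm k n hnk]
      · rw [ha2 k n hnk, ha1, comm k n hnk]
  have hgt : ∀ k : ℕ, ∀ᶠ m in (↑p : Filter ℕ), k < m := by
    intro k
    apply hp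
    rw [Nat.cofinite_eq_atTop]
    exact Filter.eventually_gt_atTop k
  set P : Set ℕ := {n : ℕ | Filter.Tendsto (fun m => a m n) ↑p (nhds (E n))} with hPdef
  have hPev : ∀ᶠ n in (↑p : Filter ℕ), n ∈ P := hP
  have step1 : ∀ n, n ∈ P → ∀ k, k ∈ P → n < k → E n = E k * a k n := by
    intro n hn k hk hnk
    have h1 : Filter.Tendsto (fun m => a m k * a k n) ↑p (nhds (E k * a k n)) :=
      hk.mul tendsto_const_nhds
    have h2 : (fun m => a m n) =ᶠ[(↑p : Filter ℕ)] (fun m => a m k * a k n) :=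
      (hgt k).mono (fun m hm => split n k m hnk hm)
    exact tendsto_nhds_unique hn (h1.congr' h2.symm)
  have step2 : ∀ n, n ∈ P → E n = e * E n := by
    intro n hn
    have h1 : Filter.Tendsto (fun k => E k * a k n) ↑p (nhds (e * E n)) :=
      hE.mul hn
    have h2 : ∀ᶠ k in (↑p : Filter ℕ), E k * a k n = E n :=
      ((hgt n).and hPev).mono (fun k hk => (step1 n hn k hk.2 hk.1).symm)
    exact tendsto_nhds_unique tendsto_const_nhds (h1.congr' h2)
  have h1 : Filter.Tendsto (fun n => e * E n) ↑p (nhds (e * e)) :=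
    tendsto_const_nhds.mul hE
  have h2 : (fun n => e * E n) =ᶠ[(↑p : Filter ℕ)] E :=
    hPev.mono (fun n hn => (step2 n hn).symm)
  exact (tendsto_nhds_unique hE (h1.congr' h2)).symm
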